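/- Let u, w be an orthonormal basis of ℂ², let ψ := u u* (a single-qubit pure state, as a 2×2 matrix) and P := 2·u u* − I₂, and let ρ be any 2×2 positive semidefinite complex matrix with trace 1. For θ ∈ [0,π] and φ ∈ [0,2π], let v(θ,φ) := cos(θ/2)·u + e^{iφ}·sin(θ/2)·w and E(θ,φ) := v(θ,φ) v(θ,φ)* (a Haar-random single-qubit projective measurement in spherical coordinates). Then (1/(4π)) · ∫_{0}^{2π} ∫_{0}^{π} sign(Re tr(E(θ,φ)·ψ) − 1/2) · (Re tr(E(θ,φ)·ρ) − 1/2) · sin θ dθ dφ = (1/4) · Re tr(P·ρ), where sign denotes the real sign function. -/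

import Mathlib

open Matrix ComplexOrder

noncomputable section

/-- The single-qubit pure state `cos(θ/2)·u + e^{iφ}·sin(θ/2)·w` in spherical coordinates
relative to the orthonormal basis `u, w` of `ℂ²`. -/
def blochVec (u w : Fin 2 → ℂ) (θ φ : ℝ) : Fin 2 → ℂ :=
  fun i => (Real.cos (θ / 2) : ℂ) * u i +
    Complex.exp (φ * Complex.I) * (Real.sin (θ / 2) : ℂ) * w i

/-- The rank-one projection `v v*` onto a vector `v ∈ ℂ²`. -/
def proj (v : Fin 2 → ℂ) : Matrix (Fin 2) (Fin 2) ℂ :=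
  Matrix.vecMulVec v (star v)

lemma sign_half (x : ℝ) : Real.sign (x / 2) = Real.sign x := by
  rcases lt_trichotomy x 0 with h | h | h
  · rw [Real.sign_of_neg h, Real.sign_of_neg (by linarith)]
  · simp [h]
  · rw [Real.sign_of_pos h, Real.sign_of_pos (by linarith)]

lemma hasDerivAtF (K B θ : ℝ) :
    HasDerivAt (fun θ : ℝ => K / 2 * (Real.sin θ ^ 2 / 2) + B * ((θ - Real.sin θ * Real.cos θ) / 2))
      ((Real.cos θ / 2 * K + Real.sin θ * B) * Real.sin θ) θ := by
  have h1 := (Real.hasDerivAt_sin θ)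
  have h2 := (Real.hasDerivAt_cos θ)
  have h3 := ((h1.pow 2).div_const 2).const_mul (K / 2)
  have h4 := ((((hasDerivAt_id θ).sub (h1.mul h2)).div_const 2).const_mul B)
  have := h3.add h4
  refine this.congr_deriv ?_
  have hpy := Real.sin_sq_add_cos_sq θ
  linear_combination (-(B / 2)) * hpy

open intervalIntegral MeasureTheory in
lemma innerint (K B : ℝ) :
    ∫ θ in (0:ℝ)..Real.pi,
      Real.sign (Real.cos θ) * (Real.cos θ / 2 * K + Real.sin θ * B) * Real.sin θ = K / 2 := by
  have pi_pos := Real.pi_pos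
  set f : ℝ → ℝ := fun θ =>
    Real.sign (Real.cos θ) * (Real.cos θ / 2 * K + Real.sin θ * B) * Real.sin θ with hf
  set g : ℝ → ℝ := fun θ => (Real.cos θ / 2 * K + Real.sin θ * B) * Real.sin θ with hg
  have hgc : Continuous g := by fun_prop
  have hae1 : ∀ᵐ x ∂(volume : Measure ℝ), x ∈ Set.uIoc (0:ℝ) (Real.pi/2) → f x = g x := by
    have hne : ∀ᵐ x ∂(volume : Measure ℝ), x ≠ Real.pi / 2 := by
      rw [MeasureTheory.ae_iff]
      simpa using (by simp : (volume : Measure ℝ) {Real.pi/2} = 0)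
    filter_upwards [hne] with x hx hmem
    rw [Set.uIoc_of_le (by linarith)] at hmem
    have hcos : 0 < Real.cos x :=
      Real.cos_pos_of_mem_Ioo ⟨by linarith [hmem.1], lt_of_le_of_ne hmem.2 hx⟩
    simp [hf, hg, Real.sign_of_pos hcos]
  have hae2 : ∀ᵐ x ∂(volume : Measure ℝ), x ∈ Set.uIoc (Real.pi/2) Real.pi → f x = -g x := by
    refine Filter.Eventually.of_forall fun x hmem => ?_
    rw [Set.uIoc_of_le (by linarith)] at hmem
    have hcos : Real.cos x < 0 :=
      Real.cos_neg_of_pi_div_two_lt_of_lt hmem.1 (by linarith [hmem.2])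
    simp only [hf, hg, Real.sign_of_neg hcos]; ring
  have h1 : ∫ θ in (0:ℝ)..(Real.pi/2), f θ = ∫ θ in (0:ℝ)..(Real.pi/2), g θ :=
    integral_congr_ae hae1
  have h2 : ∫ θ in (Real.pi/2)..Real.pi, f θ = ∫ θ in (Real.pi/2)..Real.pi, -g θ :=
    integral_congr_ae hae2
  have hi1 : IntervalIntegrable f volume 0 (Real.pi/2) := by
    rw [intervalIntegrable_iff]
    exact (hgc.intervalIntegrable 0 (Real.pi/2)).def'.congr
      ((ae_restrict_iff' measurableSet_uIoc).mpr (hae1.mono fun x h hx => (h hx).symm))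
  have hi2 : IntervalIntegrable f volume (Real.pi/2) Real.pi := by
    rw [intervalIntegrable_iff]
    exact ((hgc.neg).intervalIntegrable (Real.pi/2) Real.pi).def'.congr
      ((ae_restrict_iff' measurableSet_uIoc).mpr (hae2.mono fun x h hx => (h hx).symm))
  have hsplit := integral_add_adjacent_intervals hi1 hi2
  have hG : ∀ a b : ℝ, ∫ θ in a..b, g θ =
      (K / 2 * (Real.sin b ^ 2 / 2) + B * ((b - Real.sin b * Real.cos b) / 2)) -
      (K / 2 * (Real.sin a ^ 2 / 2) + B * ((a - Real.sin a * Real.cos a) / 2)) := by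
    intro a b
    exact integral_eq_sub_of_hasDerivAt (fun x _ => hasDerivAtF K B x)
      (hgc.intervalIntegrable a b)
  rw [← hsplit, h1, h2, intervalIntegral.integral_neg, hG, hG]
  simp only [Real.sin_pi_div_two, Real.cos_pi_div_two, Real.sin_pi, Real.cos_pi, Real.sin_zero,
    Real.cos_zero]
  ring

lemma trace_proj (v : Fin 2 → ℂ) (ρ : Matrix (Fin 2) (Fin 2) ℂ) :
    (proj v * ρ).trace = ∑ j, ∑ i, starRingEnd ℂ (v j) * ρ j i * v i := by
  simp [proj, Matrix.trace, Matrix.mul_apply, Matrix.vecMulVec_apply, Matrix.diag,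
    Fin.sum_univ_two, Pi.star_apply, RCLike.star_def]
  ring

lemma complete (u w : Fin 2 → ℂ)
    (hu : ∑ i, starRingEnd ℂ (u i) * u i = 1)
    (hw : ∑ i, starRingEnd ℂ (w i) * w i = 1)
    (huw : ∑ i, starRingEnd ℂ (u i) * w i = 0) :
    proj u + proj w = 1 := by
  have hwu : ∑ i, starRingEnd ℂ (w i) * u i = 0 := by
    have := congrArg (starRingEnd ℂ) huw
    simpa [map_sum, mul_comm] using this
  set M : Matrix (Fin 2) (Fin 2) ℂ := Matrix.of (fun i j => ![u, w] j i) with hM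
  simp only [Fin.sum_univ_two] at hu hw huw hwu
  have h1 : Mᴴ * M = 1 := by
    ext a b
    fin_cases a <;> fin_cases b <;>
      simp [hM, Matrix.mul_apply, Matrix.conjTranspose_apply, Fin.sum_univ_two,
        Matrix.one_apply] <;>
      first | exact hu | exact hw | exact huw | exact hwu
  have h2 : M * Mᴴ = 1 := mul_eq_one_comm.mp h1
  ext i j
  have := congrFun (congrFun h2 i) j
  simp [hM, Matrix.mul_apply, Matrix.conjTranspose_apply, Fin.sum_univ_two] at this
  simp [proj, Matrix.vecMulVec_apply, Pi.star_apply, RCLike.star_def, Matrix.one_apply] at this ⊢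
  exact this

/-- Expectation, over a Haar-random single-qubit projective measurement `E`, of
`sign(tr(E ψ) − 1/2)·(tr(E ρ) − 1/2)`, where `ψ = u u*` is a pure state: it equals
`(1/4)·tr(P ρ)` with `P = 2·u u* − I₂`. -/
theorem haar_random_single_qubit (u w : Fin 2 → ℂ)
    (hu : ∑ i, starRingEnd ℂ (u i) * u i = 1)
    (hw : ∑ i, starRingEnd ℂ (w i) * w i = 1)
    (huw : ∑ i, starRingEnd ℂ (u i) * w i = 0)
    (ρ : Matrix (Fin 2) (Fin 2) ℂ) (hρ : ρ.PosSemidef) (htr : ρ.trace = 1) :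
    (1 / (4 * Real.pi)) *
        ∫ φ in (0 : ℝ)..(2 * Real.pi), ∫ θ in (0 : ℝ)..Real.pi,
          Real.sign ((proj (blochVec u w θ φ) * proj u).trace.re - 1 / 2) *
            ((proj (blochVec u w θ φ) * ρ).trace.re - 1 / 2) * Real.sin θ =
      (1 / 4) * (((2 : ℂ) • proj u - 1) * ρ).trace.re := by
  have hherm : ∀ i j, starRingEnd ℂ (ρ i j) = ρ j i := by
    intro i j
    have := congrFun (congrFun hρ.1 j) i
    simpa [Matrix.conjTranspose_apply] using this
  have hwu : ∑ i, starRingEnd ℂ (w i) * u i = 0 := by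
    have := congrArg (starRingEnd ℂ) huw
    simpa [map_sum, mul_comm] using this
  have hcomp := complete u w hu hw huw
  set A : ℝ := (∑ j, ∑ i, starRingEnd ℂ (u j) * ρ j i * u i).re with hA
  set D : ℝ := (∑ j, ∑ i, starRingEnd ℂ (w j) * ρ j i * w i).re with hD
  set Ccx : ℂ := ∑ j, ∑ i, starRingEnd ℂ (u j) * ρ j i * w i with hCcx
  have hAD : A + D = 1 := by
    have h1 : ((proj u + proj w) * ρ).trace = ρ.trace := by rw [hcomp, one_mul]
    rw [add_mul, Matrix.trace_add, trace_proj, trace_proj, htr] at h1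
    have := congrArg Complex.re h1
    simpa [hA, hD] using this
  simp only [Fin.sum_univ_two] at hu huw hwu
  -- pointwise identity for the integrand
  have key : ∀ φ θ : ℝ,
      Real.sign ((proj (blochVec u w θ φ) * proj u).trace.re - 1 / 2) *
        ((proj (blochVec u w θ φ) * ρ).trace.re - 1 / 2) * Real.sin θ =
      Real.sign (Real.cos θ) *
        (Real.cos θ / 2 * (A - D) +
          Real.sin θ * (Complex.exp (φ * Complex.I) * Ccx).re) * Real.sin θ := by
    intro φ θ
    set c : ℝ := Real.cos (θ / 2) with hc
    set s : ℝ := Real.sin (θ / 2) with hs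
    set E : ℂ := Complex.exp (φ * Complex.I) with hE
    have hEconj : starRingEnd ℂ E = Complex.exp (-(φ * Complex.I)) := by
      rw [hE, ← Complex.exp_conj]
      congr 1
      simp [Complex.conj_I, mul_comm]
    have hEE : starRingEnd ℂ E * E = 1 := by
      rw [hEconj, ← Complex.exp_add]; simp
    have hpy : s ^ 2 + c ^ 2 = 1 := Real.sin_sq_add_cos_sq (θ / 2)
    have hcosθ : Real.cos θ = c ^ 2 - s ^ 2 := by
      rw [hc, hs, ← Real.cos_two_mul']
      congr 1
      ring
    have hsinθ : Real.sin θ = 2 * s * c := by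
      rw [hc, hs, ← Real.sin_two_mul]
      congr 1
      ring
    have hsigntr : (proj (blochVec u w θ φ) * proj u).trace = ((c : ℂ))^2 := by
      rw [trace_proj]
      simp only [proj, blochVec, Matrix.vecMulVec_apply, Pi.star_apply, RCLike.star_def,
        Fin.sum_univ_two, map_add, _root_.map_mul, Complex.conj_ofReal]
      linear_combination
        ((c:ℂ)^2 * ((starRingEnd ℂ) (u 0) * u 0 + (starRingEnd ℂ) (u 1) * u 1 + 1)) * hu +
        ((c:ℂ) * (s:ℂ) * E * ((starRingEnd ℂ) (u 0) * u 0 + (starRingEnd ℂ) (u 1) * u 1)) * huw +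
        ((c:ℂ) * (s:ℂ) * (starRingEnd ℂ) E *
            ((starRingEnd ℂ) (u 0) * u 0 + (starRingEnd ℂ) (u 1) * u 1) +
          (s:ℂ)^2 * (starRingEnd ℂ) E * E *
            ((starRingEnd ℂ) (u 0) * w 0 + (starRingEnd ℂ) (u 1) * w 1)) * hwu
    have htrval : (proj (blochVec u w θ φ) * ρ).trace =
        ((c : ℂ))^2 * (∑ j, ∑ i, starRingEnd ℂ (u j) * ρ j i * u i) +
        ((s : ℂ))^2 * (∑ j, ∑ i, starRingEnd ℂ (w j) * ρ j i * w i) +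
        ((c : ℂ) * s) * (E * Ccx + starRingEnd ℂ (E * Ccx)) := by
      have h2 : (proj (blochVec u w θ φ) * ρ).trace =
          ((c : ℂ))^2 * (∑ j, ∑ i, starRingEnd ℂ (u j) * ρ j i * u i) +
          ((s : ℂ))^2 * (starRingEnd ℂ E * E) *
            (∑ j, ∑ i, starRingEnd ℂ (w j) * ρ j i * w i) +
          ((c : ℂ) * s) * (E * Ccx + starRingEnd ℂ (E * Ccx)) := by
        rw [trace_proj]
        simp only [hCcx, blochVec, Fin.sum_univ_two, map_add, _root_.map_mul,
          Complex.conj_ofReal, Complex.conj_conj]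
        rw [hherm 0 0, hherm 0 1, hherm 1 0, hherm 1 1]
        ring
      rw [h2, hEE, mul_one]
    have h₁ : (proj (blochVec u w θ φ) * proj u).trace.re - 1 / 2 = Real.cos θ / 2 := by
      rw [hsigntr]
      have : ((c : ℂ) ^ 2).re = c ^ 2 := by
        rw [← Complex.ofReal_pow, Complex.ofReal_re]
      rw [this]
      nlinarith [hpy, hcosθ]
    have h₂ : (proj (blochVec u w θ φ) * ρ).trace.re - 1 / 2 =
        Real.cos θ / 2 * (A - D) + Real.sin θ * (E * Ccx).re := by
      rw [htrval]
      have e1 : ∀ (r : ℝ) (z : ℂ), ((r:ℂ) * z).re = r * z.re := fun r z => by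
        simp [Complex.mul_re]
      have hre : (((c : ℂ))^2 * (∑ j, ∑ i, starRingEnd ℂ (u j) * ρ j i * u i) +
          ((s : ℂ))^2 * (∑ j, ∑ i, starRingEnd ℂ (w j) * ρ j i * w i) +
          ((c : ℂ) * s) * (E * Ccx + starRingEnd ℂ (E * Ccx))).re =
          c^2 * A + s^2 * D + c * s * (2 * (E * Ccx).re) := by
        rw [hA, hD, Complex.add_re, Complex.add_re, ← Complex.ofReal_pow, ← Complex.ofReal_pow,
          ← Complex.ofReal_mul, e1, e1, e1, Complex.add_re, Complex.conj_re]
        ring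
      rw [hre, hcosθ, hsinθ]
      nlinarith [hpy, hAD]
    rw [h₁, h₂, sign_half]
  have hinner : ∀ φ : ℝ,
      (∫ θ in (0 : ℝ)..Real.pi,
        Real.sign ((proj (blochVec u w θ φ) * proj u).trace.re - 1 / 2) *
          ((proj (blochVec u w θ φ) * ρ).trace.re - 1 / 2) * Real.sin θ) = (A - D) / 2 := by
    intro φ
    rw [intervalIntegral.integral_congr (fun θ _ => key φ θ)]
    exact innerint (A - D) ((Complex.exp (φ * Complex.I) * Ccx).re)
  rw [intervalIntegral.integral_congr (g := fun _ => (A - D) / 2) (fun φ _ => hinner φ)]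
  rw [intervalIntegral.integral_const, smul_eq_mul]
  have hRHS : (((2 : ℂ) • proj u - 1) * ρ).trace.re = A - D := by
    have h1 : (((2 : ℂ) • proj u - 1) * ρ).trace =
        (2 : ℂ) * (∑ j, ∑ i, starRingEnd ℂ (u j) * ρ j i * u i) - 1 := by
      rw [sub_mul, Matrix.smul_mul, Matrix.trace_sub, Matrix.trace_smul, one_mul, trace_proj,
        htr, smul_eq_mul]
    have h2 := congrArg Complex.re h1
    simp only [Complex.sub_re, Complex.mul_re, Complex.one_re] at h2
    rw [h2]
    simp only [← hA]
    norm_num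
    linarith [hAD]
  rw [hRHS]
  have hπ : Real.pi ≠ 0 := Real.pi_ne_zero
  field_simp
  ring
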